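/- Let α>1. There exist ε₀>0 and C>0 (depending only on α) with the following property. Let V:ℝ→ℝ be 2π-periodic and C⁴ with ‖V−cos‖_{H⁴}≤ε₀. Let k∈αℤ∖{0}, λ∈ℝ, ε∈ℝ∖{0}. Suppose φ,F:ℝ→ℂ are 2π-periodic, φ is C², F is C¹, and with f:=φ''−k²φ one has V(y)(f(y)+φ(y))−(λ+iε)f(y)=F(y) for all y. Then |ε|·k²·(‖φ'‖_{L²}²+k²‖φ‖_{L²}²)^{1/2} ≤ C·(‖F'‖_{L²}²+k²‖F‖_{L²}²)^{1/2}. -/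

import Mathlib

open Real MeasureTheory

/-- The `L²` norm over one period `[0,2π]` of a complex-valued function. -/
noncomputable def l2C (g : ℝ → ℂ) : ℝ := Real.sqrt (∫ y in (0:ℝ)..(2*π), ‖g y‖^2)

/-- The `L²` norm over one period `[0,2π]` of a real-valued function. -/
noncomputable def l2R (g : ℝ → ℝ) : ℝ := Real.sqrt (∫ y in (0:ℝ)..(2*π), (g y)^2)

/-- The `H⁴` norm over one period `[0,2π]` of a real-valued function. -/
noncomputable def H4R (g : ℝ → ℝ) : ℝ :=
  Real.sqrt (∑ j ∈ Finset.range 5, (l2R (iteratedDeriv j g))^2)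

/-- The norm `‖(∂_y,k) g‖_{L²} = (‖g'‖_{L²}² + k²‖g‖_{L²}²)^{1/2}`. -/
noncomputable def H1k (k : ℝ) (g : ℝ → ℂ) : ℝ :=
  Real.sqrt ((l2C (deriv g))^2 + k^2 * (l2C g)^2)

local notation "conj'" => starRingEnd ℂ

lemma my_cs (u v : ℝ → ℝ) (hu : Continuous u) (hv : Continuous v) :
    ∫ y in (0:ℝ)..(2*π), u y * v y ≤
      Real.sqrt (∫ y in (0:ℝ)..(2*π), (u y)^2) * Real.sqrt (∫ y in (0:ℝ)..(2*π), (v y)^2) := by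
  have hle : (0:ℝ) ≤ 2*π := by positivity
  set A := ∫ y in (0:ℝ)..(2*π), (u y)^2 with hA
  set B := ∫ y in (0:ℝ)..(2*π), (v y)^2 with hB
  set Cc := ∫ y in (0:ℝ)..(2*π), u y * v y with hC
  have hAnn : 0 ≤ A := intervalIntegral.integral_nonneg hle (fun x _ => sq_nonneg _)
  have hBnn : 0 ≤ B := intervalIntegral.integral_nonneg hle (fun x _ => sq_nonneg _)
  have key : ∀ t : ℝ, 0 ≤ A * (t * t) + (2*Cc) * t + B := by
    intro t
    have h0 : 0 ≤ ∫ y in (0:ℝ)..(2*π), (t * u y + v y)^2 :=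
      intervalIntegral.integral_nonneg hle (fun x _ => sq_nonneg _)
    have hexp : (∫ y in (0:ℝ)..(2*π), (t * u y + v y)^2)
        = A * (t*t) + (2*Cc)*t + B := by
      have : ∀ y : ℝ, (t * u y + v y)^2 = (t*t) * (u y)^2 + (2*t) * (u y * v y) + (v y)^2 := by
        intro y; ring
      rw [intervalIntegral.integral_congr (fun y _ => this y)]
      rw [intervalIntegral.integral_add, intervalIntegral.integral_add,
        intervalIntegral.integral_const_mul, intervalIntegral.integral_const_mul]
      · ring
      · exact ((continuous_const.mul (hu.pow 2))).intervalIntegrable _ _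
      · exact ((continuous_const.mul (hu.mul hv))).intervalIntegrable _ _
      · exact (((continuous_const.mul (hu.pow 2))).add
          ((continuous_const.mul (hu.mul hv)))).intervalIntegrable _ _
      · exact (hv.pow 2).intervalIntegrable _ _
    linarith [hexp ▸ h0]
  have hdis : discrim A (2*Cc) B ≤ 0 := discrim_le_zero key
  rw [discrim] at hdis
  have hsq : Cc^2 ≤ A * B := by nlinarith
  calc Cc ≤ |Cc| := le_abs_self _
    _ = Real.sqrt (Cc^2) := (Real.sqrt_sq_eq_abs Cc).symm
    _ ≤ Real.sqrt (A * B) := Real.sqrt_le_sqrt hsq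
    _ = Real.sqrt A * Real.sqrt B := Real.sqrt_mul hAnn _

lemma my_ibp (u v : ℝ → ℂ) (hu : Differentiable ℝ u) (hv : Differentiable ℝ v)
    (hu' : Continuous (deriv u)) (hv' : Continuous (deriv v))
    (hb : u (2*π) * conj' (v (2*π)) = u 0 * conj' (v 0)) :
    ∫ y in (0:ℝ)..(2*π), deriv u y * conj' (v y)
      = - ∫ y in (0:ℝ)..(2*π), u y * conj' (deriv v y) := by
  have h := intervalIntegral.integral_deriv_mul_eq_sub (a := 0) (b := 2*π)
    (u := u) (v := fun y => conj' (v y)) (u' := deriv u) (v' := fun y => conj' (deriv v y))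
    (fun x _ => (hu x).hasDerivAt)
    (fun x _ => ((hv x).hasDerivAt.star : HasDerivAt _ _ _))
    (hu'.intervalIntegrable _ _)
    ((Complex.continuous_conj.comp hv').intervalIntegrable _ _)
  rw [show (fun x => deriv u x * (fun y => conj' (v y)) x + u x * (fun y => conj' (deriv v y)) x)
      = (fun x => deriv u x * conj' (v x) + u x * conj' (deriv v x)) from rfl] at h
  have i1 : IntervalIntegrable (fun x => deriv u x * conj' (v x)) volume 0 (2*π) :=
    ((hu'.mul (Complex.continuous_conj.comp hv.continuous) :
      Continuous (fun x => deriv u x * conj' (v x)))).intervalIntegrable _ _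
  have i2 : IntervalIntegrable (fun x => u x * conj' (deriv v x)) volume 0 (2*π) :=
    ((hu.continuous.mul (Complex.continuous_conj.comp hv') :
      Continuous (fun x => u x * conj' (deriv v x)))).intervalIntegrable _ _
  rw [intervalIntegral.integral_add i1 i2] at h
  rw [hb] at h
  linear_combination h

lemma my_periodic_deriv (f : ℝ → ℂ) (c : ℝ) (hf : Function.Periodic f c) :
    Function.Periodic (deriv f) c := by
  intro x
  rw [← deriv_comp_add_const]
  congr 1
  ext y
  exact hf y

lemma int_split2 (p q : ℝ → ℂ) (c1 c2 : ℂ) (hp : Continuous p) (hq : Continuous q) :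
    (∫ y in (0:ℝ)..(2*π), (c1 * p y + c2 * q y))
      = c1 * (∫ y in (0:ℝ)..(2*π), p y) + c2 * ∫ y in (0:ℝ)..(2*π), q y := by
  rw [intervalIntegral.integral_add (f := fun y => c1 * p y) (g := fun y => c2 * q y) ((continuous_const.mul hp : Continuous (fun y => c1 * p y)).intervalIntegrable _ _)
    ((continuous_const.mul hq : Continuous (fun y => c2 * q y)).intervalIntegrable _ _),
    intervalIntegral.integral_const_mul, intervalIntegral.integral_const_mul]

lemma int_split4 (p q r s : ℝ → ℂ) (c1 c2 c3 c4 : ℂ)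
    (hp : Continuous p) (hq : Continuous q) (hr : Continuous r) (hs : Continuous s) :
    (∫ y in (0:ℝ)..(2*π), (c1 * p y + c2 * q y + (c3 * r y + c4 * s y)))
      = c1 * (∫ y in (0:ℝ)..(2*π), p y) + c2 * (∫ y in (0:ℝ)..(2*π), q y)
        + (c3 * (∫ y in (0:ℝ)..(2*π), r y) + c4 * ∫ y in (0:ℝ)..(2*π), s y) := by
  have h := int_split2 (fun y => c1 * p y + c2 * q y) (fun y => c3 * r y + c4 * s y) 1 1
    (by continuity) (by continuity)
  simp only [one_mul] at h
  rw [h, int_split2 p q c1 c2 hp hq, int_split2 r s c3 c4 hr hs]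

set_option maxHeartbeats 1000000 in
theorem stmt3 (α : ℝ) (hα : 1 < α) :
    ∃ ε₀ C : ℝ, 0 < ε₀ ∧ 0 < C ∧
      ∀ (V : ℝ → ℝ), Function.Periodic V (2*π) → ContDiff ℝ 4 V →
        H4R (fun y => V y - Real.cos y) ≤ ε₀ →
      ∀ (k : ℝ), (∃ n : ℤ, k = α * n) → k ≠ 0 →
      ∀ (lam ε : ℝ), ε ≠ 0 →
      ∀ (φ F : ℝ → ℂ), Function.Periodic φ (2*π) → ContDiff ℝ 2 φ →
        Function.Periodic F (2*π) → ContDiff ℝ 1 F →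
        (∀ y : ℝ, (V y : ℂ) * ((deriv (deriv φ) y - (k:ℂ)^2 * φ y) + φ y)
            - ((lam : ℂ) + Complex.I * (ε : ℂ)) * (deriv (deriv φ) y - (k:ℂ)^2 * φ y) = F y) →
        |ε| * k^2 * H1k k φ ≤ C * H1k k F := by
  have hα2 : (0:ℝ) < α^2 - 1 := by nlinarith
  refine ⟨1, 3*α^2/(α^2-1), one_pos, by positivity, ?_⟩
  intro V hVper hVc4 _ k hkex hk0 lam ε hε φ F hφper hφc hFper hFc heq
  have hle : (0:ℝ) ≤ 2*π := by positivity
  -- smoothness facts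
  have hsm : Continuous (deriv (deriv φ)) ∧ Differentiable ℝ (deriv φ) ∧ Differentiable ℝ φ := by
    rw [show (2 : WithTop ℕ∞) = 1 + 1 from by norm_num, contDiff_succ_iff_deriv] at hφc
    obtain ⟨h1, -, h2⟩ := hφc
    rw [contDiff_one_iff_deriv] at h2
    exact ⟨h2.2, h2.1, h1⟩
  obtain ⟨hφ2c, hφ1d, hφd⟩ := hsm
  have hφ1c : Continuous (deriv φ) := hφ1d.continuous
  have hφ0c : Continuous φ := hφd.continuous
  obtain ⟨hFd, hF1c⟩ := contDiff_one_iff_deriv.mp hFc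
  have hF0c : Continuous F := hFd.continuous
  -- k is large
  have hk2 : α^2 ≤ k^2 := by
    obtain ⟨n0, hkeq⟩ := hkex
    have hn0 : n0 ≠ 0 := by
      rintro rfl
      exact hk0 (by rw [hkeq]; simp)
    have h1n : (1:ℝ) ≤ (n0:ℝ)^2 := by
      have h := Int.one_le_abs hn0
      have h' : (1:ℝ) ≤ |(n0:ℝ)| := by exact_mod_cast h
      nlinarith [sq_abs ((n0:ℝ))]
    rw [hkeq]
    nlinarith [sq_nonneg α]
  have hk1 : (1:ℝ) < k^2 := by nlinarith
  -- periodicity at endpoints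
  have eφ : φ (2*π) = φ 0 := by have := hφper 0; rwa [zero_add] at this
  have eφ1 : deriv φ (2*π) = deriv φ 0 := by
    have := my_periodic_deriv φ _ hφper 0; rwa [zero_add] at this
  -- the functions f and g
  obtain ⟨f, hf_def⟩ : ∃ f : ℝ → ℂ, f = fun y => deriv (deriv φ) y - (k:ℂ)^2 * φ y := ⟨_, rfl⟩
  obtain ⟨g, hg_def⟩ : ∃ g : ℝ → ℂ, g = fun y => f y + φ y := ⟨_, rfl⟩
  have hfc : Continuous f := by rw [hf_def]; exact hφ2c.sub (continuous_const.mul hφ0c)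
  have hgc : Continuous g := by rw [hg_def]; exact hfc.add hφ0c
  -- real quantities
  obtain ⟨a, ha_def⟩ : ∃ x : ℝ, x = ∫ y in (0:ℝ)..(2*π), ‖φ y‖^2 := ⟨_, rfl⟩
  obtain ⟨b, hb_def⟩ : ∃ x : ℝ, x = ∫ y in (0:ℝ)..(2*π), ‖deriv φ y‖^2 := ⟨_, rfl⟩
  obtain ⟨d, hd_def⟩ : ∃ x : ℝ, x = ∫ y in (0:ℝ)..(2*π), ‖deriv (deriv φ) y‖^2 := ⟨_, rfl⟩
  obtain ⟨n, hn_def⟩ : ∃ x : ℝ, x = ∫ y in (0:ℝ)..(2*π), ‖f y‖^2 := ⟨_, rfl⟩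
  obtain ⟨m, hm_def⟩ : ∃ x : ℝ, x = ∫ y in (0:ℝ)..(2*π), ‖g y‖^2 := ⟨_, rfl⟩
  obtain ⟨nF, hnF_def⟩ : ∃ x : ℝ, x = ∫ y in (0:ℝ)..(2*π), ‖F y‖^2 := ⟨_, rfl⟩
  obtain ⟨nF', hnF'_def⟩ : ∃ x : ℝ, x = ∫ y in (0:ℝ)..(2*π), ‖deriv F y‖^2 := ⟨_, rfl⟩
  have ha0 : 0 ≤ a := ha_def ▸ intervalIntegral.integral_nonneg hle (fun x _ => sq_nonneg _)
  have hb0 : 0 ≤ b := hb_def ▸ intervalIntegral.integral_nonneg hle (fun x _ => sq_nonneg _)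
  have hd0 : 0 ≤ d := hd_def ▸ intervalIntegral.integral_nonneg hle (fun x _ => sq_nonneg _)
  have hn0 : 0 ≤ n := hn_def ▸ intervalIntegral.integral_nonneg hle (fun x _ => sq_nonneg _)
  have hm0 : 0 ≤ m := hm_def ▸ intervalIntegral.integral_nonneg hle (fun x _ => sq_nonneg _)
  have hnF0 : 0 ≤ nF := hnF_def ▸ intervalIntegral.integral_nonneg hle (fun x _ => sq_nonneg _)
  have hnF'0 : 0 ≤ nF' := hnF'_def ▸ intervalIntegral.integral_nonneg hle (fun x _ => sq_nonneg _)
  -- z * conj z = ‖z‖²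
  have mc : ∀ z : ℂ, z * conj' z = ((‖z‖^2 : ℝ) : ℂ) := fun z => by
    rw [Complex.mul_conj]
    norm_cast
    simp [Complex.normSq_eq_norm_sq]
  have intc : ∀ u : ℝ → ℂ, (∫ y in (0:ℝ)..(2*π), u y * conj' (u y))
      = ((∫ y in (0:ℝ)..(2*π), ‖u y‖^2 : ℝ) : ℂ) := by
    intro u
    rw [intervalIntegral.integral_congr (g := fun y => ((‖u y‖^2 : ℝ) : ℂ)) (fun y _ => mc (u y))]
    exact intervalIntegral.integral_ofReal
  -- integration by parts
  have ibp1 := my_ibp (deriv φ) φ hφ1d hφd hφ2c hφ1c (by rw [eφ, eφ1])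
  have ibp2 := my_ibp φ (deriv φ) hφd hφ1d hφ1c hφ2c (by rw [eφ, eφ1])
  have hPb : (∫ y in (0:ℝ)..(2*π), deriv φ y * conj' (deriv φ y)) = (b:ℂ) := by rw [hb_def]; exact intc (deriv φ)
  have hPa : (∫ y in (0:ℝ)..(2*π), φ y * conj' (φ y)) = (a:ℂ) := by rw [ha_def]; exact intc φ
  have hPd : (∫ y in (0:ℝ)..(2*π), deriv (deriv φ) y * conj' (deriv (deriv φ) y)) = (d:ℂ) := by
    rw [hd_def]; exact intc (deriv (deriv φ))
  have hP21 : (∫ y in (0:ℝ)..(2*π), deriv (deriv φ) y * conj' (φ y)) = -(b:ℂ) := by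
    rw [ibp1, hPb]
  have hP12 : (∫ y in (0:ℝ)..(2*π), φ y * conj' (deriv (deriv φ) y)) = -(b:ℂ) := by
    linear_combination ibp2 - hPb
  -- conj of f
  have hconjf : ∀ y, conj' (f y) = conj' (deriv (deriv φ) y) - (k:ℂ)^2 * conj' (φ y) := by
    intro y
    rw [hf_def]
    simp only [map_sub, map_mul, map_pow, Complex.conj_ofReal]
  -- expansion of ∫ f conj f
  have hn_c : ((n : ℝ) : ℂ) = ((d + 2*k^2*b + k^4*a : ℝ) : ℂ) := by
    rw [hn_def, ← intc f]
    have e_ff : ∀ y ∈ Set.uIcc (0:ℝ) (2*π), f y * conj' (f y)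
        = 1 * (deriv (deriv φ) y * conj' (deriv (deriv φ) y))
          + (-(k:ℂ)^2) * (deriv (deriv φ) y * conj' (φ y))
          + ((-(k:ℂ)^2) * (φ y * conj' (deriv (deriv φ) y))
            + ((k:ℂ)^2*(k:ℂ)^2) * (φ y * conj' (φ y))) := by
      intro y _
      rw [hconjf y, hf_def]
      ring
    rw [intervalIntegral.integral_congr e_ff]
    have step := int_split4 (fun y => deriv (deriv φ) y * conj' (deriv (deriv φ) y))
      (fun y => deriv (deriv φ) y * conj' (φ y))
      (fun y => φ y * conj' (deriv (deriv φ) y))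
      (fun y => φ y * conj' (φ y))
      1 (-(k:ℂ)^2) (-(k:ℂ)^2) ((k:ℂ)^2*(k:ℂ)^2)
      (hφ2c.mul (Complex.continuous_conj.comp hφ2c))
      (hφ2c.mul (Complex.continuous_conj.comp hφ0c))
      (hφ0c.mul (Complex.continuous_conj.comp hφ2c))
      (hφ0c.mul (Complex.continuous_conj.comp hφ0c))
    rw [step, hPd, hP21, hP12, hPa]
    push_cast
    ring
  have hn_real : n = d + 2*k^2*b + k^4*a := by exact_mod_cast hn_c
  -- ∫ f conj φ and ∫ φ conj f
  have hPfφ : (∫ y in (0:ℝ)..(2*π), f y * conj' (φ y)) = ((-b - k^2*a : ℝ) : ℂ) := by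
    have e1 : ∀ y ∈ Set.uIcc (0:ℝ) (2*π), f y * conj' (φ y)
        = 1 * (deriv (deriv φ) y * conj' (φ y)) + (-(k:ℂ)^2) * (φ y * conj' (φ y)) := by
      intro y _; rw [hf_def]; ring
    rw [intervalIntegral.integral_congr e1]
    have step := int_split2 (fun y => deriv (deriv φ) y * conj' (φ y))
      (fun y => φ y * conj' (φ y)) 1 (-(k:ℂ)^2)
      (hφ2c.mul (Complex.continuous_conj.comp hφ0c))
      (hφ0c.mul (Complex.continuous_conj.comp hφ0c))
    rw [step, hP21, hPa]
    push_cast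
    ring
  have hPφf : (∫ y in (0:ℝ)..(2*π), φ y * conj' (f y)) = ((-b - k^2*a : ℝ) : ℂ) := by
    have e1 : ∀ y ∈ Set.uIcc (0:ℝ) (2*π), φ y * conj' (f y)
        = 1 * (φ y * conj' (deriv (deriv φ) y)) + (-(k:ℂ)^2) * (φ y * conj' (φ y)) := by
      intro y _; rw [hconjf y]; ring
    rw [intervalIntegral.integral_congr e1]
    have step := int_split2 (fun y => φ y * conj' (deriv (deriv φ) y))
      (fun y => φ y * conj' (φ y)) 1 (-(k:ℂ)^2)
      (hφ0c.mul (Complex.continuous_conj.comp hφ2c))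
      (hφ0c.mul (Complex.continuous_conj.comp hφ0c))
    rw [step, hP12, hPa]
    push_cast
    ring
  -- expansion of m
  have hm_c : ((m : ℝ) : ℂ) = ((n + (-b - k^2*a) + ((-b - k^2*a) + a) : ℝ) : ℂ) := by
    rw [hm_def, ← intc g]
    have e1 : ∀ y ∈ Set.uIcc (0:ℝ) (2*π), g y * conj' (g y)
        = 1 * (f y * conj' (f y)) + 1 * (f y * conj' (φ y))
          + (1 * (φ y * conj' (f y)) + 1 * (φ y * conj' (φ y))) := by
      intro y _
      rw [hg_def]
      simp only [map_add]
      ring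
    rw [intervalIntegral.integral_congr e1]
    have step := int_split4 (fun y => f y * conj' (f y)) (fun y => f y * conj' (φ y))
      (fun y => φ y * conj' (f y)) (fun y => φ y * conj' (φ y)) 1 1 1 1
      (hfc.mul (Complex.continuous_conj.comp hfc))
      (hfc.mul (Complex.continuous_conj.comp hφ0c))
      (hφ0c.mul (Complex.continuous_conj.comp hfc))
      (hφ0c.mul (Complex.continuous_conj.comp hφ0c))
    rw [step, intc f, ← hn_def, hPfφ, hPφf, hPa]
    push_cast
    ring
  have hm_real : m = n + (-b - k^2*a) + ((-b - k^2*a) + a) := by exact_mod_cast hm_c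
  -- Q := ∫ f conj g
  obtain ⟨Q, hQ_def⟩ : ∃ x : ℝ, x = n - b - k^2*a := ⟨_, rfl⟩
  have hPfg : (∫ y in (0:ℝ)..(2*π), f y * conj' (g y)) = ((Q : ℝ) : ℂ) := by
    have e1 : ∀ y ∈ Set.uIcc (0:ℝ) (2*π), f y * conj' (g y)
        = 1 * (f y * conj' (f y)) + 1 * (f y * conj' (φ y)) := by
      intro y _
      rw [hg_def]
      simp only [map_add]
      ring
    rw [intervalIntegral.integral_congr e1]
    have step := int_split2 (fun y => f y * conj' (f y)) (fun y => f y * conj' (φ y)) 1 1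
      (hfc.mul (Complex.continuous_conj.comp hfc))
      (hfc.mul (Complex.continuous_conj.comp hφ0c))
    rw [step, intc f, ← hn_def, hPfφ, hQ_def]
    push_cast
    ring
  -- the main identity from the equation
  obtain ⟨w, hw_def⟩ : ∃ x : ℝ, x = ∫ y in (0:ℝ)..(2*π), V y * ‖g y‖^2 := ⟨_, rfl⟩
  have hIF : (∫ y in (0:ℝ)..(2*π), F y * conj' (g y))
      = (w:ℂ) - ((lam:ℂ) + Complex.I * (ε:ℂ)) * (Q:ℂ) := by
    have e1 : ∀ y ∈ Set.uIcc (0:ℝ) (2*π), F y * conj' (g y)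
        = 1 * (((V y : ℝ) : ℂ) * (g y * conj' (g y)))
          + (-((lam:ℂ) + Complex.I * (ε:ℂ))) * (f y * conj' (g y)) := by
      intro y _
      rw [← heq y]
      rw [hg_def, hf_def]
      ring
    rw [intervalIntegral.integral_congr e1]
    have step := int_split2 (fun y => ((V y : ℝ) : ℂ) * (g y * conj' (g y)))
      (fun y => f y * conj' (g y)) 1 (-((lam:ℂ) + Complex.I * (ε:ℂ)))
      ((Complex.continuous_ofReal.comp hVc4.continuous).mul
        (hgc.mul (Complex.continuous_conj.comp hgc)))
      (hfc.mul (Complex.continuous_conj.comp hgc))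
    rw [step, hPfg]
    have e2 : (∫ y in (0:ℝ)..(2*π), ((V y : ℝ) : ℂ) * (g y * conj' (g y))) = ((w:ℝ):ℂ) := by
      have e3 : ∀ y ∈ Set.uIcc (0:ℝ) (2*π), ((V y : ℝ) : ℂ) * (g y * conj' (g y))
          = ((V y * ‖g y‖^2 : ℝ) : ℂ) := by
        intro y _
        rw [mc (g y)]
        push_cast
        ring
      rw [intervalIntegral.integral_congr e3, hw_def]
      exact intervalIntegral.integral_ofReal
    rw [e2]
    ring
  -- positivity of Q
  have hQcn : (α^2 - 1) * n ≤ α^2 * Q := by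
    rw [hQ_def, hn_real]
    nlinarith [mul_nonneg (mul_nonneg (sq_nonneg k) (sub_nonneg.mpr hk2)) ha0,
      mul_nonneg (sub_nonneg.mpr hk2) hb0, hd0, sq_nonneg k, sq_nonneg α]
  have hQ0 : 0 ≤ Q := by nlinarith [mul_nonneg (le_of_lt (by nlinarith : (0:ℝ) < α^2 - 1)) hn0]
  -- imaginary part identity
  have him : (∫ y in (0:ℝ)..(2*π), F y * conj' (g y)).im = -(ε*Q) := by
    rw [hIF]
    simp [Complex.add_im, Complex.mul_im, Complex.ofReal_im, Complex.ofReal_re]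
  -- the key bound
  have hnorm : ‖∫ y in (0:ℝ)..(2*π), F y * conj' (g y)‖ ≤ Real.sqrt nF * Real.sqrt m := by
    calc ‖∫ y in (0:ℝ)..(2*π), F y * conj' (g y)‖
        ≤ ∫ y in (0:ℝ)..(2*π), ‖F y * conj' (g y)‖ :=
          intervalIntegral.norm_integral_le_integral_norm hle
      _ = ∫ y in (0:ℝ)..(2*π), ‖F y‖ * ‖g y‖ := by
          refine intervalIntegral.integral_congr (fun y _ => ?_)
          rw [norm_mul, RCLike.norm_conj]
      _ ≤ Real.sqrt nF * Real.sqrt m := by rw [hnF_def, hm_def]; exact my_cs _ _ hF0c.norm hgc.norm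
  have habs : |ε| * Q ≤ Real.sqrt nF * Real.sqrt m := by
    have h1 : |(∫ y in (0:ℝ)..(2*π), F y * conj' (g y)).im|
        ≤ ‖∫ y in (0:ℝ)..(2*π), F y * conj' (g y)‖ := by
      exact Complex.abs_im_le_norm _
    rw [him, abs_neg, abs_mul, abs_of_nonneg hQ0] at h1
    exact h1.trans hnorm
  -- squared bound
  have hsq : ε^2 * Q^2 ≤ nF * m := by
    have h2 := mul_self_le_mul_self (mul_nonneg (abs_nonneg ε) hQ0) habs
    have e1 : (|ε| * Q)*(|ε| * Q) = ε^2*Q^2 := by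
      rw [show (|ε| * Q)*(|ε| * Q) = |ε|^2*Q^2 from by ring, sq_abs]
    have e2 : (Real.sqrt nF * Real.sqrt m)*(Real.sqrt nF * Real.sqrt m) = nF * m := by
      rw [show (Real.sqrt nF * Real.sqrt m)*(Real.sqrt nF * Real.sqrt m)
        = (Real.sqrt nF * Real.sqrt nF) * (Real.sqrt m * Real.sqrt m) from by ring,
        Real.mul_self_sqrt hnF0, Real.mul_self_sqrt hm0]
    rw [e1, e2] at h2
    exact h2
  have hmn : m ≤ n := by
    rw [hm_real]
    nlinarith [mul_nonneg (le_of_lt (sub_pos.mpr hk1)) ha0, hb0]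
  have hfin : ε^2 * Q^2 ≤ nF * n := hsq.trans (mul_le_mul_of_nonneg_left hmn hnF0)
  -- unfold H1k
  have hH1φ : H1k k φ = Real.sqrt (b + k^2*a) := by
    rw [H1k, l2C, l2C, ← hb_def, ← ha_def, Real.sq_sqrt hb0, Real.sq_sqrt ha0]
  have hH1F : H1k k F = Real.sqrt (nF' + k^2*nF) := by
    rw [H1k, l2C, l2C, ← hnF'_def, ← hnF_def, Real.sq_sqrt hnF'0, Real.sq_sqrt hnF0]
  rw [hH1φ, hH1F]
  have hba0 : 0 ≤ b + k^2*a := by positivity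
  have hnn0 : 0 ≤ nF' + k^2*nF := by positivity
  obtain ⟨C, hC_def⟩ : ∃ x : ℝ, x = 3*α^2/(α^2-1) := ⟨_, rfl⟩
  rw [← hC_def]
  have hC0 : 0 < C := by rw [hC_def]; positivity
  clear heq hconjf mc intc ibp1 ibp2 hPb hPa hPd hP21 hP12 hPfφ hPφf hn_c hm_c hPfg hIF him
    hnorm habs hsq ha_def hb_def hd_def hn_def hm_def hnF_def hnF'_def hw_def hφc hFc hVc4
    hVper hφper hFper eφ eφ1 hφ2c hφ1d hφd hφ1c hφ0c hFd hF1c hF0c hfc hgc hf_def hg_def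
    hH1φ hH1F hkex hk0 hm_real hmn hm0
  -- main squared estimate
  have GOAL2 : ε^2*k^4*(b + k^2*a) ≤ C^2 * (nF' + k^2*nF) := by
    rcases eq_or_lt_of_le hn0 with hnz | hnp
    · have hb_eq : b = 0 := by nlinarith [sq_nonneg k, sq_nonneg (k*k)]
      have ha_eq : a = 0 := by nlinarith [sq_nonneg k, sq_nonneg (k*k)]
      rw [hb_eq, ha_eq]
      simpa using mul_nonneg (sq_nonneg C) hnn0
    · -- n > 0
      obtain ⟨c0, hc0_def⟩ : ∃ x : ℝ, x = (α^2-1)/α^2 := ⟨_, rfl⟩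
      have hc0 : (0:ℝ) < c0 := by rw [hc0_def]; positivity
    
      have hQge : c0 * n ≤ Q := by
        rw [hc0_def, div_mul_eq_mul_div, div_le_iff₀ (by positivity : (0:ℝ) < α^2)]
        nlinarith [hQcn]
      have hq2 : (c0*n)*(c0*n) ≤ Q*Q := mul_self_le_mul_self (by positivity) hQge
      have h3 : ε^2*((c0*n)*(c0*n)) ≤ nF * n := by
        calc ε^2*((c0*n)*(c0*n)) ≤ ε^2*(Q*Q) := by nlinarith [sq_nonneg ε]
          _ = ε^2*Q^2 := by ring
          _ ≤ nF * n := hfin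
      have hεn : ε^2*c0^2*n ≤ nF := by
        have h4 : (ε^2*c0^2*n) * n ≤ nF * n := by nlinarith [h3]
        exact le_of_mul_le_mul_right h4 hnp
      have h2b : 2*k^2*b ≤ n := by nlinarith [mul_nonneg (mul_nonneg (sq_nonneg k) (sq_nonneg k)) ha0]
      have h2a : k^4*a ≤ n := by nlinarith [mul_nonneg (sq_nonneg k) hb0]
      have t1 : ε^2*(2*k^2*b) ≤ ε^2*n := mul_le_mul_of_nonneg_left h2b (sq_nonneg ε)
      have t2 : ε^2*(k^4*a) ≤ ε^2*n := mul_le_mul_of_nonneg_left h2a (sq_nonneg ε)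
      have t4 : ε^2*(k^2*b + k^4*a) ≤ (3/2)*(ε^2*n) := by nlinarith [t1, t2]
      have t6 : k^2*(ε^2*(k^2*b + k^4*a)) ≤ k^2*((3/2)*(ε^2*n)) :=
        mul_le_mul_of_nonneg_left t4 (sq_nonneg k)
      have t7 : k^2*(ε^2*c0^2*n) ≤ k^2*nF :=
        mul_le_mul_of_nonneg_left hεn (sq_nonneg k)
      have hCc : C = 3/c0 := by
        rw [hC_def, hc0_def]
        field_simp
      rw [hCc, div_pow, div_mul_eq_mul_div, le_div_iff₀ (by positivity : (0:ℝ) < c0^2)]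
      have t8 := mul_le_mul_of_nonneg_left t6 (sq_nonneg c0)
      nlinarith [t8, t7, mul_nonneg (sq_nonneg k) hnF0, hnF'0]
  -- conclude via square roots
  have l1 : 0 ≤ |ε| * k^2*Real.sqrt (b + k^2*a) := by positivity
  have l2 : 0 ≤ C*Real.sqrt (nF' + k^2*nF) := by positivity
  have hLsq : (|ε| * k^2*Real.sqrt (b + k^2*a))^2 = ε^2*k^4*(b + k^2*a) := by
    rw [mul_pow, mul_pow, sq_abs, Real.sq_sqrt hba0]
    ring
  have hRsq : (C*Real.sqrt (nF' + k^2*nF))^2 = C^2 * (nF' + k^2*nF) := by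
    rw [mul_pow, Real.sq_sqrt hnn0]
  calc |ε| * k^2*Real.sqrt (b + k^2*a)
      = Real.sqrt ((|ε| * k^2*Real.sqrt (b + k^2*a))^2) := (Real.sqrt_sq l1).symm
    _ ≤ Real.sqrt ((C*Real.sqrt (nF' + k^2*nF))^2) := by
        rw [hLsq, hRsq]; exact Real.sqrt_le_sqrt GOAL2
    _ = C*Real.sqrt (nF' + k^2*nF) := Real.sqrt_sq l2
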